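/- Fix positive integers s₁, s₂ and let (κ_i)_{i=1,…,s₁s₂} be an orthonormal basis of the space of functions supported in the s₁×s₂ grid. Then for every finitely supported X : ℤ×ℤ → ℝ, one has ∑_{i=1}^{s₁s₂} ‖X⊗κ_i‖_F² = s₁·s₂·‖X‖_F². -/

import Mathlib

/-- Images, kernels, and filters: finitely supported functions `ℤ × ℤ → ℝ`. -/
abbrev Img := (ℤ × ℤ) →₀ ℝ

/-- Discrete 2D convolution: `(X ⊗ Y)(i,j) = ∑_{(u,v)} X((i,j)-(u,v)) * Y(u,v)`. -/
noncomputable def conv (X Y : Img) : Img :=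
  X.sum fun a xa => Y.sum fun b yb => Finsupp.single (a + b) (xa * yb)

/-- Frobenius norm `‖X‖_F = √(∑ X(i,j)²)`. -/
noncomputable def frob (X : Img) : ℝ := Real.sqrt (X.sum fun _ c => c ^ 2)

/-- Inner product `⟨X, Y⟩ = ∑ X(i,j) * Y(i,j)`. -/
noncomputable def inner2 (X Y : Img) : ℝ := X.sum fun p c => c * Y p

/-- ℓ¹ norm `‖X‖₁ = ∑ |X(i,j)|`. -/
noncomputable def l1 (X : Img) : ℝ := X.sum fun _ c => |c|

/-- The simplex `S` of blur kernels: nonnegative entries summing to one. -/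
def InSimplex (K : Img) : Prop := (∀ p, 0 ≤ K p) ∧ (K.sum fun _ c => c) = 1

/-- `X` is supported in the `a × b` grid `{0,…,a-1} × {0,…,b-1}`. -/
def SuppIn (a b : ℕ) (X : Img) : Prop :=
  ∀ p : ℤ × ℤ, ¬(0 ≤ p.1 ∧ p.1 < (a : ℤ) ∧ 0 ≤ p.2 ∧ p.2 < (b : ℤ)) → X p = 0

/-- For an orthonormal basis `(κ_i)` of the `s₁ × s₂` grid space,
`∑ᵢ ‖X ⊗ κᵢ‖_F² = s₁ s₂ ‖X‖_F²`. -/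
lemma conv_apply_eq_sum (X Y : Img) {B : Finset (ℤ × ℤ)} (hB : Y.support ⊆ B) (q : ℤ × ℤ) :
    conv X Y q = ∑ b ∈ B, X (q - b) * Y b := by
  classical
  have h1 : conv X Y q = ∑ b ∈ Y.support, X (q - b) * Y b := by
    rw [conv, Finsupp.sum_apply]
    simp only [Finsupp.sum_apply, Finsupp.sum, Finsupp.finset_sum_apply, Finsupp.single_apply]
    rw [Finset.sum_comm]
    refine Finset.sum_congr rfl fun b hb => ?_
    simp only [← eq_sub_iff_add_eq]
    rw [Finset.sum_ite_eq' X.support (q - b) (fun a => X a * Y b)]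
    by_cases h : q - b ∈ X.support
    · simp [h]
    · simp [h, Finsupp.notMem_support_iff.mp h]
  rw [h1]
  exact Finset.sum_subset hB (fun b _ hb => by
    simp [Finsupp.notMem_support_iff.mp hb])

lemma frob_sq_eq (Z : Img) {S : Finset (ℤ × ℤ)} (hS : Z.support ⊆ S) :
    frob Z ^ 2 = ∑ q ∈ S, Z q ^ 2 := by
  have h0 : (Z.sum fun _ c => c ^ 2) = ∑ q ∈ S, Z q ^ 2 := by
    rw [Finsupp.sum]
    exact Finset.sum_subset hS (fun q _ hq => by
      simp [Finsupp.notMem_support_iff.mp hq])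
  rw [frob, h0, Real.sq_sqrt (Finset.sum_nonneg fun q _ => sq_nonneg _)]

theorem sum_sq_frob_conv_orthonormal (s₁ s₂ : ℕ) (hs₁ : 0 < s₁) (hs₂ : 0 < s₂)
    (κ : Fin (s₁ * s₂) → Img) (hsupp : ∀ i, SuppIn s₁ s₂ (κ i))
    (hortho : ∀ i j, inner2 (κ i) (κ j) = if i = j then 1 else 0)
    (X : Img) :
    ∑ i, frob (conv X (κ i)) ^ 2 = (s₁ : ℝ) * (s₂ : ℝ) * frob X ^ 2 := by
  classical
  set G : Finset (ℤ × ℤ) := Finset.Ico (0:ℤ) (s₁:ℤ) ×ˢ Finset.Ico (0:ℤ) (s₂:ℤ) with hG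
  have hsuppG : ∀ i, (κ i).support ⊆ G := by
    intro i p hp
    rw [Finsupp.mem_support_iff] at hp
    by_contra h
    apply hp
    apply hsupp i
    intro hcond
    exact h (by
      simp only [hG, Finset.mem_product, Finset.mem_Ico]
      exact ⟨⟨hcond.1, hcond.2.1⟩, ⟨hcond.2.2.1, hcond.2.2.2⟩⟩)
  have hGcard : G.card = s₁ * s₂ := by
    simp [hG, Int.card_Ico]
  let E := EuclideanSpace ℝ {x // x ∈ G}
  let v : Fin (s₁ * s₂) → E := fun i => WithLp.toLp 2 (fun u => κ i u.1)
  -- inner products on E vs inner2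
  have hinnerE : ∀ (x y : E), @inner ℝ E _ x y = ∑ u ∈ G.attach, x u * y u := by
    intro x y
    rw [PiLp.inner_apply]
    simp [Finset.univ_eq_attach, mul_comm]
  have hone : Orthonormal ℝ v := by
    rw [orthonormal_iff_ite]
    intro i j
    rw [← hortho i j, hinnerE]
    have : ∑ u ∈ G.attach, v i u * v j u = ∑ p ∈ G, κ i p * κ j p :=
      Finset.sum_attach G (fun p => κ i p * κ j p)
    rw [this, inner2, Finsupp.sum]
    exact (Finset.sum_subset (hsuppG i) (fun p _ hp => by
      simp [Finsupp.notMem_support_iff.mp hp])).symm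
  haveI : Nonempty (Fin (s₁ * s₂)) := Fin.pos_iff_nonempty.mp (Nat.mul_pos hs₁ hs₂)
  have hcard : Fintype.card (Fin (s₁ * s₂)) = Module.finrank ℝ E := by
    simp [E, finrank_euclideanSpace, Fintype.card_coe, hGcard]
  have hsp : ⊤ ≤ Submodule.span ℝ (Set.range v) := by
    have hb := (basisOfLinearIndependentOfCardEqFinrank hone.linearIndependent hcard).span_eq
    rw [coe_basisOfLinearIndependentOfCardEqFinrank] at hb
    exact hb.ge
  let b : OrthonormalBasis (Fin (s₁ * s₂)) ℝ E := OrthonormalBasis.mk hone hsp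
  have hbv : ∀ i, b i = v i := fun i => by
    rw [show b i = (⇑b) i from rfl, OrthonormalBasis.coe_mk]
  -- Parseval
  have parseval : ∀ w : E, ∑ i, (@inner ℝ E _ w (v i)) ^ 2 = @inner ℝ E _ w w := by
    intro w
    have := b.sum_inner_mul_inner w w
    calc ∑ i, (@inner ℝ E _ w (v i)) ^ 2
        = ∑ i, @inner ℝ E _ w (b i) * @inner ℝ E _ (b i) w := by
          refine Finset.sum_congr rfl fun i _ => ?_
          rw [hbv, sq, real_inner_comm (v i) w]
      _ = @inner ℝ E _ w w := this
  -- the common support set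
  set S : Finset (ℤ × ℤ) := Finset.image (fun pr : (ℤ × ℤ) × (ℤ × ℤ) => pr.1 + pr.2)
      (X.support ×ˢ G) with hS
  have hconv0 : ∀ (i : Fin (s₁ * s₂)) (q : ℤ × ℤ), q ∉ S → conv X (κ i) q = 0 := by
    intro i q hq
    rw [conv_apply_eq_sum X (κ i) (hsuppG i) q]
    apply Finset.sum_eq_zero
    intro c hc
    rcases eq_or_ne (X (q - c)) 0 with h | h
    · rw [h, zero_mul]
    · exact absurd (Finset.mem_image.mpr ⟨(q - c, c),
        Finset.mem_product.mpr ⟨Finsupp.mem_support_iff.mpr h, hc⟩, by simp⟩) hq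
  have hconvsupp : ∀ i, (conv X (κ i)).support ⊆ S := by
    intro i q hq
    by_contra h
    exact Finsupp.mem_support_iff.mp hq (hconv0 i q h)
  -- rewrite LHS
  have step1 : ∑ i, frob (conv X (κ i)) ^ 2 = ∑ q ∈ S, ∑ i, (conv X (κ i) q) ^ 2 := by
    rw [Finset.sum_comm]
    exact Finset.sum_congr rfl fun i _ => frob_sq_eq _ (hconvsupp i)
  -- conv value as inner product
  have step2 : ∀ (q : ℤ × ℤ) (i : Fin (s₁ * s₂)),
      conv X (κ i) q = @inner ℝ E _ (WithLp.toLp 2 (fun u : {x // x ∈ G} => X (q - u.1)) : E) (v i) := by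
    intro q i
    rw [conv_apply_eq_sum X (κ i) (hsuppG i) q, hinnerE]
    exact (Finset.sum_attach G (fun p => X (q - p) * κ i p)).symm
  have step3 : ∀ q : ℤ × ℤ, ∑ i, (conv X (κ i) q) ^ 2 = ∑ p ∈ G, X (q - p) ^ 2 := by
    intro q
    have := parseval (WithLp.toLp 2 (fun u : {x // x ∈ G} => X (q - u.1)) : E)
    simp_rw [step2 q]
    rw [this, hinnerE]
    rw [Finset.sum_attach G (fun p => X (q - p) * X (q - p))]
    exact Finset.sum_congr rfl fun p _ => (sq (X (q - p))).symm ▸ (sq (X (q - p)))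
  have hfrobX : frob X ^ 2 = ∑ p ∈ X.support, X p ^ 2 := frob_sq_eq X (le_refl _)
  have hshift : ∀ c ∈ G, ∑ q ∈ S, X (q - c) ^ 2 = frob X ^ 2 := by
    intro c hc
    have himg : X.support.image (fun p => p + c) ⊆ S := by
      intro q hq
      rcases Finset.mem_image.mp hq with ⟨p, hp, rfl⟩
      exact Finset.mem_image.mpr ⟨(p, c), Finset.mem_product.mpr ⟨hp, hc⟩, rfl⟩
    rw [hfrobX]
    rw [← Finset.sum_subset himg (fun q _ hq2 => by
      have : q - c ∉ X.support := fun hmem => hq2 (Finset.mem_image.mpr ⟨q - c, hmem, by abel⟩)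
      simp [Finsupp.notMem_support_iff.mp this])]
    rw [Finset.sum_image (fun p _ p' _ h => by simpa using h)]
    exact Finset.sum_congr rfl fun p _ => by simp
  calc ∑ i, frob (conv X (κ i)) ^ 2
      = ∑ q ∈ S, ∑ p ∈ G, X (q - p) ^ 2 := by
        rw [step1]; exact Finset.sum_congr rfl fun q _ => step3 q
    _ = ∑ p ∈ G, ∑ q ∈ S, X (q - p) ^ 2 := Finset.sum_comm
    _ = ∑ p ∈ G, frob X ^ 2 := Finset.sum_congr rfl hshift
    _ = (s₁ : ℝ) * (s₂ : ℝ) * frob X ^ 2 := by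
        rw [Finset.sum_const, hGcard, nsmul_eq_mul]
        push_cast
        ring
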